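/- For the truncated Filippov system ẋ = Ax + bμ for x₁ < 0 and ẋ = c for x₁ > 0, suppose x^S is a point with x^S₁ = 0 satisfying f^L₁(x^S) c − c₁ f^L(x^S) = 0 (pseudo-equilibrium equation, where f^L(x) = Ax + bμ), and suppose qᵀ c ≠ 0 where qᵀ = e₁ᵀ adj(A). Then f^L₁(x^S) · c₁ = s c₁² / (qᵀ c), where s = qᵀ b μ. In particular the sign of f^L₁(x^S) f^R₁(x^S) (which determines admissibility of the pseudo-equilibrium) equals the sign of s/(qᵀ c). -/

import Mathlib

open Matrix

/-- Admissibility of the pseudo-equilibrium of the truncated Filippov system: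
`f^L₁(x^S) c₁ = s c₁² / (qᵀ c)`. -/
theorem pseudo_equilibrium_admissibility (n : ℕ)
    (A : Matrix (Fin (n+1)) (Fin (n+1)) ℝ) (b c : Fin (n+1) → ℝ) (μ : ℝ)
    (fL : (Fin (n+1) → ℝ) → (Fin (n+1) → ℝ)) (hfL : ∀ x, fL x = A.mulVec x + μ • b)
    (q : Fin (n+1) → ℝ) (hq : q = (adjugate A) 0)
    (s : ℝ) (hs : s = (q ⬝ᵥ b) * μ)
    (hqc : q ⬝ᵥ c ≠ 0)
    (xS : Fin (n+1) → ℝ) (hxS1 : xS 0 = 0)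
    (hpseudo : (fL xS 0) • c - (c 0) • fL xS = 0) :
    fL xS 0 * c 0 = s * (c 0) ^ 2 / (q ⬝ᵥ c) := by
  -- q ⬝ᵥ A.mulVec xS = det A * xS 0 = 0
  have hqA : q ⬝ᵥ A.mulVec xS = 0 := by
    have : q ⬝ᵥ A.mulVec xS = ((adjugate A * A).mulVec xS) 0 := by
      rw [hq, ← mulVec_mulVec]; rfl
    rw [this, adjugate_mul, smul_mulVec, one_mulVec]
    simp [hxS1]
  have hqfL : q ⬝ᵥ fL xS = s := by
    rw [hfL, dotProduct_add, hqA, zero_add, dotProduct_smul, hs, smul_eq_mul,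
      mul_comm]
  -- dot the pseudo-equilibrium equation with q
  have hdot : fL xS 0 * (q ⬝ᵥ c) = c 0 * s := by
    have h := congrArg (fun v => q ⬝ᵥ v) hpseudo
    simp only [dotProduct_sub, dotProduct_smul, smul_eq_mul, dotProduct_zero,
      hqfL, sub_eq_zero] at h
    exact h
  field_simp
  calc fL xS 0 * c 0 * (q ⬝ᵥ c) = (fL xS 0 * (q ⬝ᵥ c)) * c 0 := by ring
    _ = c 0 * s * c 0 := by rw [hdot]
    _ = c 0 ^ 2 * s := by ring
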